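/- Normalized Kadell integral monotonicity: for a partition μ of length at most n, indices 1 ≤ i < j ≤ n with λ = R_{ij}(μ) (λ_i = μ_i+1, λ_j = μ_j−1, λ_k = μ_k otherwise, λ still a partition), and parameters r, s, τ > 0, define Ĩ_λ(τ;r,s) = ∏_{i=1}^n ⟨(n−i)τ + r⟩_{λ_i} / ⟨(2n−i−1)τ + r + s⟩_{λ_i}. Then Ĩ_λ/Ĩ_μ − 1 = ((j−i)τ + λ_i − λ_j − 1)·((n−1)τ + s) / (((n−j)τ + λ_j + r)·((2n−i−1)τ + λ_i + r + s − 1)), and in particular Ĩ_λ ≥ Ĩ_μ for all τ, r, s > 0. -/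

import Mathlib

open Finset

/-- The rising factorial (Pochhammer symbol) `⟨x⟩_k = x(x+1)⋯(x+k-1)`. -/
noncomputable def poch (x : ℝ) (k : ℕ) : ℝ := ∏ i ∈ Finset.range k, (x + i)

lemma poch_pos {x : ℝ} (hx : 0 < x) (k : ℕ) : 0 < poch x k := by
  apply Finset.prod_pos
  intro i _
  have : (0:ℝ) ≤ i := Nat.cast_nonneg i
  linarith

lemma poch_succ (x : ℝ) (k : ℕ) : poch x (k + 1) = poch x k * (x + k) :=
  Finset.prod_range_succ _ k

/-- The normalized Kadell integral
`Ĩ_λ(τ;r,s) = ∏_{i=1}^n ⟨(n-i)τ+r⟩_{λ_i} / ⟨(2n-i-1)τ+r+s⟩_{λ_i}`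
(here indexed by `k = i-1 ∈ Fin n`). -/
noncomputable def kadell {n : ℕ} (lam : Fin n → ℕ) (τ r s : ℝ) : ℝ :=
  ∏ k : Fin n,
    poch (((n : ℝ) - 1 - (k : ℕ)) * τ + r) (lam k) /
      poch ((2 * (n : ℝ) - (k : ℕ) - 2) * τ + r + s) (lam k)

/-- Monotonicity of the normalized Kadell integral under the raising operator:
if `λ = R_{ij}(μ)` is again a partition, then
`Ĩ_λ/Ĩ_μ - 1 = ((j-i)τ + λ_i - λ_j - 1)((n-1)τ + s) /
(((n-j)τ + λ_j + r)((2n-i-1)τ + λ_i + r + s - 1))`, and in particular `Ĩ_μ ≤ Ĩ_λ`. -/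
theorem kadell_raising_monotone
    (n : ℕ) (μ : Fin n → ℕ) (hμ : ∀ a b : Fin n, a ≤ b → μ b ≤ μ a)
    (i j : Fin n) (hij : i < j) (hμj : 1 ≤ μ j)
    (lam : Fin n → ℕ)
    (hlam : ∀ k : Fin n, lam k = if k = i then μ i + 1 else if k = j then μ j - 1 else μ k)
    (hpart : ∀ a b : Fin n, a ≤ b → lam b ≤ lam a)
    (τ r s : ℝ) (hτ : 0 < τ) (hr : 0 < r) (hs : 0 < s) :
    kadell lam τ r s / kadell μ τ r s - 1 =
      (((j : ℕ) - (i : ℕ) : ℝ) * τ + (lam i : ℝ) - (lam j : ℝ) - 1) *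
        (((n : ℝ) - 1) * τ + s) /
      ((((n : ℝ) - 1 - (j : ℕ)) * τ + (lam j : ℝ) + r) *
        ((2 * (n : ℝ) - (i : ℕ) - 2) * τ + (lam i : ℝ) + r + s - 1)) ∧
    kadell μ τ r s ≤ kadell lam τ r s := by
  classical
  have hij' : i ≠ j := ne_of_lt hij
  -- base points
  have hkn : ∀ k : Fin n, ((k : ℕ) : ℝ) + 1 ≤ (n : ℝ) := by
    intro k; exact_mod_cast k.isLt
  have ha : ∀ k : Fin n, 0 < ((n : ℝ) - 1 - (k : ℕ)) * τ + r := by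
    intro k
    have h1 : (0:ℝ) ≤ ((n : ℝ) - 1 - (k : ℕ)) * τ :=
      mul_nonneg (by linarith [hkn k]) hτ.le
    linarith
  have hb : ∀ k : Fin n, 0 < (2 * (n : ℝ) - (k : ℕ) - 2) * τ + r + s := by
    intro k
    have h1 : (0:ℝ) ≤ (2 * (n : ℝ) - (k : ℕ) - 2) * τ :=
      mul_nonneg (by linarith [hkn k, hkn i]) hτ.le
    linarith
  have hli : lam i = μ i + 1 := by rw [hlam i]; simp
  have hμj' : μ j = lam j + 1 := by
    rw [hlam j, if_neg (Ne.symm hij'), if_pos rfl]; omega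
  have hμij : μ j ≤ μ i := hμ i j hij.le
  -- the four linear factors
  set A : ℝ := ((n : ℝ) - 1 - (i : ℕ)) * τ + r + (μ i : ℝ) with hA
  set B : ℝ := (2 * (n : ℝ) - (i : ℕ) - 2) * τ + r + s + (μ i : ℝ) with hB
  set C : ℝ := ((n : ℝ) - 1 - (j : ℕ)) * τ + r + (lam j : ℝ) with hC
  set D : ℝ := (2 * (n : ℝ) - (j : ℕ) - 2) * τ + r + s + (lam j : ℝ) with hD
  have hApos : 0 < A := by have := ha i; have : (0:ℝ) ≤ (μ i : ℝ) := Nat.cast_nonneg _; unfold A; linarith [ha i]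
  have hBpos : 0 < B := by have : (0:ℝ) ≤ (μ i : ℝ) := Nat.cast_nonneg _; unfold B; linarith [hb i]
  have hCpos : 0 < C := by have : (0:ℝ) ≤ (lam j : ℝ) := Nat.cast_nonneg _; unfold C; linarith [ha j]
  have hDpos : 0 < D := by have : (0:ℝ) ≤ (lam j : ℝ) := Nat.cast_nonneg _; unfold D; linarith [hb j]
  have hμpos : 0 < kadell μ τ r s := by
    apply Finset.prod_pos
    intro k _
    exact div_pos (poch_pos (ha k) _) (poch_pos (hb k) _)
  -- the ratio
  have hmain : kadell lam τ r s / kadell μ τ r s = (A / B) * (D / C) := by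
    rw [kadell, kadell, ← Finset.prod_div_distrib]
    rw [← Finset.mul_prod_erase Finset.univ _ (Finset.mem_univ i)]
    have hjmem : j ∈ Finset.univ.erase i := Finset.mem_erase.mpr ⟨Ne.symm hij', Finset.mem_univ j⟩
    rw [← Finset.mul_prod_erase _ _ hjmem]
    have hrest : ∏ k ∈ (Finset.univ.erase i).erase j,
        (poch (((n : ℝ) - 1 - (k : ℕ)) * τ + r) (lam k) /
          poch ((2 * (n : ℝ) - (k : ℕ) - 2) * τ + r + s) (lam k)) /
        (poch (((n : ℝ) - 1 - (k : ℕ)) * τ + r) (μ k) /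
          poch ((2 * (n : ℝ) - (k : ℕ) - 2) * τ + r + s) (μ k)) = 1 := by
      apply Finset.prod_eq_one
      intro k hk
      have hk1 : k ≠ j := (Finset.mem_erase.mp hk).1
      have hk2 : k ≠ i := (Finset.mem_erase.mp (Finset.mem_erase.mp hk).2).1
      have : lam k = μ k := by rw [hlam k, if_neg hk2, if_neg hk1]
      rw [this]
      exact div_self (ne_of_gt (div_pos (poch_pos (ha k) _) (poch_pos (hb k) _)))
    rw [hrest, mul_one]
    -- compute factor at i
    have hi : (poch (((n : ℝ) - 1 - (i : ℕ)) * τ + r) (lam i) /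
          poch ((2 * (n : ℝ) - (i : ℕ) - 2) * τ + r + s) (lam i)) /
        (poch (((n : ℝ) - 1 - (i : ℕ)) * τ + r) (μ i) /
          poch ((2 * (n : ℝ) - (i : ℕ) - 2) * τ + r + s) (μ i)) = A / B := by
      rw [hli, poch_succ, poch_succ]
      have h1 := (poch_pos (ha i) (μ i)).ne'
      have h2 := (poch_pos (hb i) (μ i)).ne'
      exact (show ∀ P Q x y : ℝ, P ≠ 0 → Q ≠ 0 → P * x / (Q * y) / (P / Q) = x / y by
        intro P Q x y h1 h2; field_simp) _ _ _ _ h1 h2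
    have hj : (poch (((n : ℝ) - 1 - (j : ℕ)) * τ + r) (lam j) /
          poch ((2 * (n : ℝ) - (j : ℕ) - 2) * τ + r + s) (lam j)) /
        (poch (((n : ℝ) - 1 - (j : ℕ)) * τ + r) (μ j) /
          poch ((2 * (n : ℝ) - (j : ℕ) - 2) * τ + r + s) (μ j)) = D / C := by
      rw [hμj', poch_succ, poch_succ]
      have h1 := (poch_pos (ha j) (lam j)).ne'
      have h2 := (poch_pos (hb j) (lam j)).ne'
      exact (show ∀ P Q x y : ℝ, P ≠ 0 → Q ≠ 0 → P / Q / (P * x / (Q * y)) = y / x by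
        intro P Q x y h1 h2; field_simp) _ _ _ _ h1 h2
    rw [hi, hj]
  -- cast facts
  have hcasti : ((lam i : ℕ) : ℝ) = (μ i : ℝ) + 1 := by rw [hli]; push_cast; ring
  have hcastj : ((μ j : ℕ) : ℝ) = (lam j : ℝ) + 1 := by rw [hμj']; push_cast; ring
  have hgap : (lam j : ℝ) + 1 ≤ (μ i : ℝ) := by
    have : lam j + 1 ≤ μ i := by omega
    exact_mod_cast this
  have hijR : ((i : ℕ) : ℝ) + 1 ≤ ((j : ℕ) : ℝ) := by
    have : (i : ℕ) + 1 ≤ (j : ℕ) := hij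
    exact_mod_cast this
  -- first conclusion
  have hgoal1 : kadell lam τ r s / kadell μ τ r s - 1 =
      (((j : ℕ) - (i : ℕ) : ℝ) * τ + (lam i : ℝ) - (lam j : ℝ) - 1) *
        (((n : ℝ) - 1) * τ + s) /
      ((((n : ℝ) - 1 - (j : ℕ)) * τ + (lam j : ℝ) + r) *
        ((2 * (n : ℝ) - (i : ℕ) - 2) * τ + (lam i : ℝ) + r + s - 1)) := by
    rw [hmain, hcasti]
    have hBne := hBpos.ne'
    have hCne := hCpos.ne'
    have hden2 : (2 * (n : ℝ) - (i : ℕ) - 2) * τ + ((μ i : ℝ) + 1) + r + s - 1 = B := by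
      unfold B; ring
    have hden1 : (((n : ℝ) - 1 - (j : ℕ)) * τ + (lam j : ℝ) + r) = C := by
      unfold C; ring
    rw [hden1, hden2]
    field_simp
    unfold A B C D
    ring
  refine ⟨hgoal1, ?_⟩
  -- second conclusion
  have hnum : 0 ≤ (((j : ℕ) - (i : ℕ) : ℝ) * τ + (lam i : ℝ) - (lam j : ℝ) - 1) *
      (((n : ℝ) - 1) * τ + s) := by
    apply mul_nonneg
    · rw [hcasti]
      nlinarith [mul_pos (show (0:ℝ) < ((j : ℕ) : ℝ) - ((i : ℕ) : ℝ) by linarith) hτ]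
    · have : (0:ℝ) ≤ ((n : ℝ) - 1) * τ := mul_nonneg (by linarith [hkn i]) hτ.le
      linarith
  have hden : 0 < (((n : ℝ) - 1 - (j : ℕ)) * τ + (lam j : ℝ) + r) *
      ((2 * (n : ℝ) - (i : ℕ) - 2) * τ + (lam i : ℝ) + r + s - 1) := by
    apply mul_pos
    · have : (0:ℝ) ≤ (lam j : ℝ) := Nat.cast_nonneg _
      linarith [ha j]
    · rw [hcasti]
      have : (0:ℝ) ≤ (μ i : ℝ) := Nat.cast_nonneg _
      linarith [hb i]
  have hR : 1 ≤ kadell lam τ r s / kadell μ τ r s := by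
    have := div_nonneg hnum hden.le
    linarith [hgoal1]
  calc kadell μ τ r s = 1 * kadell μ τ r s := (one_mul _).symm
    _ ≤ (kadell lam τ r s / kadell μ τ r s) * kadell μ τ r s :=
        mul_le_mul_of_nonneg_right hR hμpos.le
    _ = kadell lam τ r s := div_mul_cancel₀ _ hμpos.ne'
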